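/- arXiv:1203.4772 — 2 statements merged into one kernel-verified Lean document; each statement's English description precedes it below -/
import Mathlib

section
/- Let n ≥ 4 and let R be a solvable complex Leibniz algebra whose nilradical is isomorphic to F_n^1. Then dim R = n+1 or dim R = n+2. -/
open Finset Module

/-- The Leibniz identity for a bilinear bracket `b`. -/
def IsLeibniz {L : Type*} [AddCommGroup L] [Module ℂ L]
    (b : L →ₗ[ℂ] L →ₗ[ℂ] L) : Prop :=
  ∀ x y z, b x (b y z) = b (b x y) z - b (b x z) y

/-- The submodule spanned by all brackets `[S, T]`. -/
def bracketSpan {L : Type*} [AddCommGroup L] [Module ℂ L]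
    (b : L →ₗ[ℂ] L →ₗ[ℂ] L) (S T : Submodule ℂ L) : Submodule ℂ L :=
  Submodule.span ℂ {z | ∃ x ∈ S, ∃ y ∈ T, z = b x y}

/-- The lower central series: `lcs b k` is `L^{k+1}`, i.e. `lcs b 0 = L¹ = L`. -/
def lcs {L : Type*} [AddCommGroup L] [Module ℂ L]
    (b : L →ₗ[ℂ] L →ₗ[ℂ] L) : ℕ → Submodule ℂ L
  | 0 => ⊤
  | k+1 => bracketSpan b (lcs b k) ⊤

/-- The derived series: `derSeries b s` is `L^{[s+1]}`. -/
def derSeries {L : Type*} [AddCommGroup L] [Module ℂ L]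
    (b : L →ₗ[ℂ] L →ₗ[ℂ] L) : ℕ → Submodule ℂ L
  | 0 => ⊤
  | s+1 => bracketSpan b (derSeries b s) (derSeries b s)

/-- The algebra `(L, b)` is nilpotent. -/
def IsNilpotentAlg {L : Type*} [AddCommGroup L] [Module ℂ L]
    (b : L →ₗ[ℂ] L →ₗ[ℂ] L) : Prop :=
  ∃ k, lcs b k = ⊥

/-- The algebra `(L, b)` is solvable. -/
def IsSolvableAlg {L : Type*} [AddCommGroup L] [Module ℂ L]
    (b : L →ₗ[ℂ] L →ₗ[ℂ] L) : Prop :=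
  ∃ s, derSeries b s = ⊥

/-- `I` is a two-sided ideal of `(L, b)`. -/
def IsIdeal {L : Type*} [AddCommGroup L] [Module ℂ L]
    (b : L →ₗ[ℂ] L →ₗ[ℂ] L) (I : Submodule ℂ L) : Prop :=
  ∀ a ∈ I, ∀ y : L, b a y ∈ I ∧ b y a ∈ I

/-- Lower central series of the ideal `I` computed inside `L`:
`idealLCS b I k` is `I^{k+1}`. -/
def idealLCS {L : Type*} [AddCommGroup L] [Module ℂ L]
    (b : L →ₗ[ℂ] L →ₗ[ℂ] L) (I : Submodule ℂ L) : ℕ → Submodule ℂ L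
  | 0 => I
  | k+1 => bracketSpan b (idealLCS b I k) I

/-- `I` is a nilpotent two-sided ideal of `(L, b)`. -/
def IsNilpotentIdeal {L : Type*} [AddCommGroup L] [Module ℂ L]
    (b : L →ₗ[ℂ] L →ₗ[ℂ] L) (I : Submodule ℂ L) : Prop :=
  IsIdeal b I ∧ ∃ k, idealLCS b I k = ⊥

/-- `I` is the nilradical (the maximal nilpotent ideal) of `(L, b)`. -/
def IsNilradical {L : Type*} [AddCommGroup L] [Module ℂ L]
    (b : L →ₗ[ℂ] L →ₗ[ℂ] L) (I : Submodule ℂ L) : Prop :=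
  IsNilpotentIdeal b I ∧ ∀ J : Submodule ℂ L, IsNilpotentIdeal b J → J ≤ I

/-- Isomorphism of bracket algebras. -/
def LeibnizIso {L M : Type*} [AddCommGroup L] [Module ℂ L] [AddCommGroup M] [Module ℂ M]
    (bL : L →ₗ[ℂ] L →ₗ[ℂ] L) (bM : M →ₗ[ℂ] M →ₗ[ℂ] M) : Prop :=
  ∃ e : L ≃ₗ[ℂ] M, ∀ x y : L, e (bL x y) = bM (e x) (e y)

/-- The nilradical of `(L, bL)` is isomorphic (as an algebra) to `(M, bM)`. -/
def NilradicalIso {L M : Type*} [AddCommGroup L] [Module ℂ L] [AddCommGroup M] [Module ℂ M]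
    (bL : L →ₗ[ℂ] L →ₗ[ℂ] L) (bM : M →ₗ[ℂ] M →ₗ[ℂ] M) : Prop :=
  ∃ I : Submodule ℂ L, IsNilradical bL I ∧
    ∃ f : M →ₗ[ℂ] L, Function.Injective f ∧ LinearMap.range f = I ∧
      ∀ x y : M, f (bM x y) = bL (f x) (f y)

/-- A derivation of the algebra `(L, b)`. -/
def IsDerivation {L : Type*} [AddCommGroup L] [Module ℂ L]
    (b : L →ₗ[ℂ] L →ₗ[ℂ] L) (d : L →ₗ[ℂ] L) : Prop :=
  ∀ x y : L, d (b x y) = b (d x) y + b x (d y)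

/-- The bilinear bracket on `Fin n → ℂ` determined by structure constants `c`. -/
noncomputable def bilin (n : ℕ) (c : Fin n → Fin n → Fin n → ℂ) :
    (Fin n → ℂ) →ₗ[ℂ] (Fin n → ℂ) →ₗ[ℂ] (Fin n → ℂ) :=
  LinearMap.mk₂ ℂ (fun x y k => ∑ i, ∑ j, x i * y j * c i j k)
    (by intro x x' y; funext k; simp [add_mul, Finset.sum_add_distrib])
    (by intro a x y; funext k; simp [Finset.mul_sum, mul_assoc])
    (by intro x y y'; funext k; simp [mul_add, add_mul, Finset.sum_add_distrib])
    (by intro a x y; funext k; simp [Finset.mul_sum, mul_assoc, mul_left_comm])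

/-- The paper's basis vector `e_i` (1-indexed: valid for `1 ≤ i ≤ n`). -/
noncomputable def E (n : ℕ) (i : ℕ) : Fin n → ℂ :=
  if h : 1 ≤ i ∧ i ≤ n then Pi.single (⟨i - 1, by omega⟩ : Fin n) 1 else 0

/-- Structure constants of the null-filiform algebra `NF_n`:
`[e_i, e_1] = e_{i+1}` for `1 ≤ i ≤ n-1` (indices are 0-based). -/
noncomputable def cNF (n : ℕ) : Fin n → Fin n → Fin n → ℂ := fun i j k =>
  if j.val = 0 ∧ k.val = i.val + 1 then 1 else 0

/-- Structure constants of `F_n^1`: `[e_1,e_1] = e_3`, `[e_i,e_1] = e_{i+1}` for `2 ≤ i ≤ n-1`. -/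
noncomputable def cF1 (n : ℕ) : Fin n → Fin n → Fin n → ℂ := fun i j k =>
  if j.val = 0 ∧ ((i.val = 0 ∧ k.val = 2) ∨ (1 ≤ i.val ∧ k.val = i.val + 1)) then 1 else 0

/-- Structure constants of `F_n^2`: `[e_1,e_1] = e_3`, `[e_i,e_1] = e_{i+1}` for `3 ≤ i ≤ n-1`. -/
noncomputable def cF2 (n : ℕ) : Fin n → Fin n → Fin n → ℂ := fun i j k =>
  if j.val = 0 ∧ ((i.val = 0 ∧ k.val = 2) ∨ (2 ≤ i.val ∧ k.val = i.val + 1)) then 1 else 0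

/-- Structure constants of the filiform Lie algebra `n_{n,1}`:
`[e_i,e_1] = -[e_1,e_i] = e_{i+1}` for `2 ≤ i ≤ n-1`. -/
noncomputable def cNn (n : ℕ) : Fin n → Fin n → Fin n → ℂ := fun i j k =>
  (if j.val = 0 ∧ 1 ≤ i.val ∧ k.val = i.val + 1 then 1 else 0)
  - (if i.val = 0 ∧ 1 ≤ j.val ∧ k.val = j.val + 1 then 1 else 0)

/-- Structure constants of the filiform Lie algebra `Q_{2n}` (on `Fin (2*n)`). -/
noncomputable def cQ (n : ℕ) : Fin (2*n) → Fin (2*n) → Fin (2*n) → ℂ := fun i j k =>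
  (if j.val = 0 ∧ 1 ≤ i.val ∧ i.val ≤ 2*n - 3 ∧ k.val = i.val + 1 then 1 else 0)
  - (if i.val = 0 ∧ 1 ≤ j.val ∧ j.val ≤ 2*n - 3 ∧ k.val = j.val + 1 then 1 else 0)
  + (if 1 ≤ i.val ∧ i.val ≤ n - 1 ∧ i.val + j.val = 2*n - 1 ∧ k.val = 2*n - 1
      then (-1 : ℂ)^(i.val + 1) else 0)
  - (if 1 ≤ j.val ∧ j.val ≤ n - 1 ∧ i.val + j.val = 2*n - 1 ∧ k.val = 2*n - 1
      then (-1 : ℂ)^(j.val + 1) else 0)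

/-- Structure constants of `R_{n+1,1}(γ₁,γ₂,γ₃)` (basis `e_1,…,e_n,x`; `x` has 0-based index `n`). -/
noncomputable def cRn (n : ℕ) (g1 g2 g3 : ℂ) : Fin (n+1) → Fin (n+1) → Fin (n+1) → ℂ := fun i j k =>
  (if j.val = 0 ∧ 1 ≤ i.val ∧ i.val ≤ n - 2 ∧ k.val = i.val + 1 then 1 else 0)
  - (if i.val = 0 ∧ 1 ≤ j.val ∧ j.val ≤ n - 2 ∧ k.val = j.val + 1 then 1 else 0)
  + (if i.val = 0 ∧ j.val = n ∧ k.val = 0 then 1 else 0)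
  - (if i.val = n ∧ j.val = 0 ∧ k.val = 0 then 1 else 0)
  + (if i.val = n ∧ j.val = 0 ∧ k.val = n - 1 then g1 else 0)
  + (if 1 ≤ i.val ∧ i.val ≤ n - 2 ∧ j.val = n ∧ k.val = i.val then ((i.val : ℂ) + 1 - n) else 0)
  + (if i.val = n ∧ 1 ≤ j.val ∧ j.val ≤ n - 2 ∧ k.val = j.val then ((n : ℂ) - j.val - 1) else 0)
  + (if i.val = n ∧ j.val = 1 ∧ k.val = n - 1 then g2 else 0)
  + (if i.val = n ∧ j.val = n ∧ k.val = n - 1 then g3 else 0)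

/-- Structure constants of `R_{2n+1,1}(γ₁,γ₂,γ₃)` (basis `e_1,…,e_{2n},x`; `x` has 0-based index `2n`). -/
noncomputable def cRQ (n : ℕ) (g1 g2 g3 : ℂ) : Fin (2*n+1) → Fin (2*n+1) → Fin (2*n+1) → ℂ := fun i j k =>
  (if j.val = 0 ∧ 1 ≤ i.val ∧ i.val ≤ 2*n - 3 ∧ k.val = i.val + 1 then 1 else 0)
  - (if i.val = 0 ∧ 1 ≤ j.val ∧ j.val ≤ 2*n - 3 ∧ k.val = j.val + 1 then 1 else 0)
  + (if 1 ≤ i.val ∧ i.val ≤ n - 1 ∧ i.val + j.val = 2*n - 1 ∧ k.val = 2*n - 1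
      then (-1 : ℂ)^(i.val + 1) else 0)
  - (if 1 ≤ j.val ∧ j.val ≤ n - 1 ∧ i.val + j.val = 2*n - 1 ∧ k.val = 2*n - 1
      then (-1 : ℂ)^(j.val + 1) else 0)
  + (if i.val = 0 ∧ j.val = 2*n ∧ k.val = 0 then 1 else 0)
  - (if i.val = 2*n ∧ j.val = 0 ∧ k.val = 0 then 1 else 0)
  + (if i.val = 2*n ∧ j.val = 0 ∧ k.val = n - 1 then g1 else 0)
  + (if 1 ≤ i.val ∧ i.val ≤ 2*n - 2 ∧ j.val = 2*n ∧ k.val = i.val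
      then ((2*n : ℂ) + 2*((i.val : ℂ) + 1) - 7)/2 else 0)
  - (if i.val = 2*n ∧ 1 ≤ j.val ∧ j.val ≤ 2*n - 2 ∧ k.val = j.val
      then ((2*n : ℂ) + 2*((j.val : ℂ) + 1) - 7)/2 else 0)
  + (if i.val = 2*n ∧ j.val = 1 ∧ k.val = n - 1 then g2 else 0)
  + (if i.val = 2*n ∧ j.val = 2*n ∧ k.val = n - 1 then g3 else 0)


-- auxiliary
noncomputable def Usub (n k : ℕ) : Submodule ℂ (Fin n → ℂ) where
  carrier := {v | ∀ j : Fin n, (j : ℕ) < k → v j = 0}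
  add_mem' := by intro a b ha hb j hj; simp only [Pi.add_apply, ha j hj, hb j hj, add_zero]
  zero_mem' := by intro j hj; rfl
  smul_mem' := by intro c v hv j hj; simp only [Pi.smul_apply, hv j hj, smul_zero]

lemma mem_Usub {n k : ℕ} {v : Fin n → ℂ} :
    v ∈ Usub n k ↔ ∀ j : Fin n, (j : ℕ) < k → v j = 0 := Iff.rfl

lemma Usub_anti {n k k' : ℕ} (h : k ≤ k') : Usub n k' ≤ Usub n k :=
  fun v hv j hj => hv j (lt_of_lt_of_le hj h)

lemma Usub_bot (n : ℕ) : Usub n n = ⊥ := by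
  apply le_antisymm
  · intro v hv
    have : v = 0 := funext fun j => hv j j.isLt
    simp [this]
  · exact bot_le

noncomputable def EV (n m : ℕ) (h : m < n) : Fin n → ℂ := Pi.single ⟨m, h⟩ 1

lemma bF_apply {n : ℕ} (hn : 4 ≤ n) (u v : Fin n → ℂ) (k : Fin n) :
    bilin n (cF1 n) u v k =
      v ⟨0, by omega⟩ *
        ((if (k : ℕ) = 2 then u ⟨0, by omega⟩ + u ⟨1, by omega⟩ else 0) +
         (if 3 ≤ (k : ℕ) then u ⟨(k : ℕ) - 1, by omega⟩ else 0)) := by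
  have h0 : (0 : ℕ) < n := by omega
  simp only [bilin, LinearMap.mk₂_apply]
  have key : ∀ i : Fin n,
      (∑ j, u i * v j * cF1 n i j k)
        = u i * v ⟨0, h0⟩ *
            (if ((i : ℕ) = 0 ∧ (k : ℕ) = 2) ∨ (1 ≤ (i : ℕ) ∧ (k : ℕ) = (i : ℕ) + 1)
              then 1 else 0) := by
    intro i
    rw [Finset.sum_eq_single (⟨0, h0⟩ : Fin n)]
    · simp [cF1]
    · intro j _ hj
      have hj' : (j : ℕ) ≠ 0 := by
        intro hc; exact hj (Fin.ext hc)
      simp [cF1, hj']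
    · intro h; exact absurd (Finset.mem_univ _) h
  rw [Finset.sum_congr rfl (fun i _ => key i)]
  by_cases hk2 : (k : ℕ) = 2
  · have hsplit : ∀ i : Fin n,
        u i * v ⟨0, h0⟩ *
            (if ((i : ℕ) = 0 ∧ (k : ℕ) = 2) ∨ (1 ≤ (i : ℕ) ∧ (k : ℕ) = (i : ℕ) + 1)
              then 1 else 0)
          = (if i = ⟨0, by omega⟩ then u i * v ⟨0, h0⟩ else 0)
            + (if i = ⟨1, by omega⟩ then u i * v ⟨0, h0⟩ else 0) := by
      intro i
      by_cases hi0 : i = (⟨0, by omega⟩ : Fin n)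
      · subst hi0; simp [hk2, Fin.ext_iff]
      · by_cases hi1 : i = (⟨1, by omega⟩ : Fin n)
        · subst hi1; simp [hk2, Fin.ext_iff]
        · have h1 : (i : ℕ) ≠ 0 := fun hc => hi0 (Fin.ext hc)
          have h2 : (i : ℕ) ≠ 1 := fun hc => hi1 (Fin.ext hc)
          have : ¬(((i : ℕ) = 0 ∧ (k : ℕ) = 2) ∨ (1 ≤ (i : ℕ) ∧ (k : ℕ) = (i : ℕ) + 1)) := by
            rw [hk2]; omega
          simp [this, hi0, hi1]
    rw [Finset.sum_congr rfl (fun i _ => hsplit i), Finset.sum_add_distrib,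
      Finset.sum_ite_eq' Finset.univ, Finset.sum_ite_eq' Finset.univ]
    have h32 : ¬ (3 ≤ (k : ℕ)) := by omega
    simp [hk2, h32]; ring
  · by_cases hk3 : 3 ≤ (k : ℕ)
    · have hsplit : ∀ i : Fin n,
          u i * v ⟨0, h0⟩ *
              (if ((i : ℕ) = 0 ∧ (k : ℕ) = 2) ∨ (1 ≤ (i : ℕ) ∧ (k : ℕ) = (i : ℕ) + 1)
                then 1 else 0)
            = (if i = ⟨(k : ℕ) - 1, by omega⟩ then u i * v ⟨0, h0⟩ else 0) := by
        intro i
        by_cases hi : i = (⟨(k : ℕ) - 1, by omega⟩ : Fin n)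
        · subst hi
          have : (1 ≤ (k : ℕ) - 1 ∧ (k : ℕ) = ((k : ℕ) - 1) + 1) := by omega
          rw [if_pos (Or.inr this), if_pos rfl]; ring
        · have h1 : (i : ℕ) ≠ (k : ℕ) - 1 := fun hc => hi (Fin.ext hc)
          have : ¬(((i : ℕ) = 0 ∧ (k : ℕ) = 2) ∨ (1 ≤ (i : ℕ) ∧ (k : ℕ) = (i : ℕ) + 1)) := by
            omega
          simp [this, hi]
      rw [Finset.sum_congr rfl (fun i _ => hsplit i), Finset.sum_ite_eq' Finset.univ]
      simp [hk2, hk3]; ring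
    · have : ∀ i : Fin n,
          u i * v ⟨0, h0⟩ *
              (if ((i : ℕ) = 0 ∧ (k : ℕ) = 2) ∨ (1 ≤ (i : ℕ) ∧ (k : ℕ) = (i : ℕ) + 1)
                then 1 else 0) = 0 := by
        intro i
        have : ¬(((i : ℕ) = 0 ∧ (k : ℕ) = 2) ∨ (1 ≤ (i : ℕ) ∧ (k : ℕ) = (i : ℕ) + 1)) := by
          omega
        simp [this]
      rw [Finset.sum_congr rfl (fun i _ => this i)]
      simp [hk2, hk3]

section BracketLemmas

variable {n : ℕ} (hn : 4 ≤ n)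
include hn

lemma stL1 (u v : Fin n → ℂ) : bilin n (cF1 n) u v ∈ Usub n 2 := by
  intro j hj
  rw [bF_apply hn]
  have h2 : ¬ ((j : ℕ) = 2) := by omega
  have h3 : ¬ (3 ≤ (j : ℕ)) := by omega
  simp [h2, h3]

lemma stL2 {m : ℕ} (hm : 2 ≤ m) {u : Fin n → ℂ} (hu : u ∈ Usub n m) (v : Fin n → ℂ) :
    bilin n (cF1 n) u v ∈ Usub n (m + 1) := by
  intro j hj
  rw [bF_apply hn]
  by_cases h2 : (j : ℕ) = 2
  · have h3 : ¬ (3 ≤ (j : ℕ)) := by omega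
    rw [if_pos h2, if_neg h3,
      hu ⟨0, by omega⟩ (by simpa using by omega : ((⟨0, by omega⟩ : Fin n) : ℕ) < m),
      hu ⟨1, by omega⟩ (by simpa using by omega : ((⟨1, by omega⟩ : Fin n) : ℕ) < m)]
    ring
  · rw [if_neg h2]
    by_cases h3 : 3 ≤ (j : ℕ)
    · rw [if_pos h3, hu ⟨(j : ℕ) - 1, by omega⟩ (by simpa using by omega)]
      ring
    · rw [if_neg h3]; ring

lemma stL5 (u v : Fin n → ℂ) :
    bilin n (cF1 n) u v = v ⟨0, by omega⟩ • bilin n (cF1 n) u (EV n 0 (by omega)) := by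
  funext k
  rw [Pi.smul_apply, bF_apply hn, bF_apply hn]
  have : EV n 0 (by omega : 0 < n) ⟨0, by omega⟩ = 1 := by
    simp [EV]
  rw [this]
  simp [smul_eq_mul]

lemma stL4a : bilin n (cF1 n) (EV n 0 (by omega)) (EV n 0 (by omega)) = EV n 2 (by omega) := by
  funext k
  rw [bF_apply hn]
  have e00 : EV n 0 (by omega : 0 < n) ⟨0, by omega⟩ = 1 := by simp [EV]
  have e01 : EV n 0 (by omega : 0 < n) ⟨1, by omega⟩ = 0 := by
    simp [EV, Pi.single_apply, Fin.ext_iff]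
  rw [e00]
  by_cases h2 : (k : ℕ) = 2
  · have h3 : ¬ (3 ≤ (k : ℕ)) := by omega
    rw [if_pos h2, if_neg h3, e01]
    have : EV n 2 (by omega : 2 < n) k = 1 := by
      simp [EV, Pi.single_apply, Fin.ext_iff, h2]
    rw [this]; ring
  · rw [if_neg h2]
    have hne : EV n 2 (by omega : 2 < n) k = 0 := by
      simp [EV, Pi.single_apply, Fin.ext_iff]; omega
    rw [hne]
    by_cases h3 : 3 ≤ (k : ℕ)
    · rw [if_pos h3]
      have : EV n 0 (by omega : 0 < n) ⟨(k : ℕ) - 1, by omega⟩ = 0 := by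
        simp [EV, Pi.single_apply, Fin.ext_iff]; omega
      rw [this]; ring
    · rw [if_neg h3]; ring

lemma stL4b {m : ℕ} (hm1 : 1 ≤ m) (hm : m + 1 < n) :
    bilin n (cF1 n) (EV n m (by omega)) (EV n 0 (by omega)) = EV n (m + 1) hm := by
  funext k
  rw [bF_apply hn]
  have e00 : EV n 0 (by omega : 0 < n) ⟨0, by omega⟩ = 1 := by simp [EV]
  rw [e00, one_mul]
  have hv : ∀ (a : ℕ) (ha : a < n), EV n m (by omega : m < n) ⟨a, ha⟩ = if a = m then 1 else 0 := by
    intro a ha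
    simp [EV, Pi.single_apply, Fin.ext_iff]
  have hgoal : EV n (m + 1) hm k = if (k : ℕ) = m + 1 then 1 else 0 := by
    by_cases hk : (k : ℕ) = m + 1
    · rw [if_pos hk]
      have hkk : k = ⟨m + 1, hm⟩ := Fin.ext hk
      rw [hkk]; simp [EV]
    · rw [if_neg hk]
      have hkk : k ≠ ⟨m + 1, hm⟩ := fun hc => hk (by rw [hc])
      simp [EV, Pi.single_apply, hkk]
  rw [hgoal]
  by_cases h2 : (k : ℕ) = 2
  · have h3 : ¬ (3 ≤ (k : ℕ)) := by omega
    rw [if_pos h2, if_neg h3, hv 0 (by omega), hv 1 (by omega)]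
    by_cases hm1' : m = 1
    · simp [hm1', h2]
    · have : ¬ (0 = m) := by omega
      have h2' : ¬ ((k : ℕ) = m + 1) := by omega
      have h1' : ¬ (1 = m) := by omega
      simp [this, h2', h1']
  · rw [if_neg h2]
    by_cases h3 : 3 ≤ (k : ℕ)
    · rw [if_pos h3, hv ((k : ℕ) - 1) (by omega)]
      by_cases hk : (k : ℕ) = m + 1
      · have : (k : ℕ) - 1 = m := by omega
        simp [this, hk]
      · have : ¬ ((k : ℕ) - 1 = m) := by omega
        simp [this, hk]
    · have : ¬ ((k : ℕ) = m + 1) := by omega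
      rw [if_neg h3, if_neg this]; ring

end BracketLemmas

section DerLemmas

variable {n : ℕ}

lemma pi_decomp (v : Fin n → ℂ) : v = ∑ j, v j • (Pi.single j 1 : Fin n → ℂ) := by
  conv_lhs => rw [← Finset.univ_sum_single v]
  refine Finset.sum_congr rfl fun j _ => ?_
  rw [← Pi.single_smul, smul_eq_mul, mul_one]

lemma D_decomp (D : (Fin n → ℂ) →ₗ[ℂ] (Fin n → ℂ)) (v : Fin n → ℂ) :
    D v = ∑ j, v j • D (Pi.single j 1 : Fin n → ℂ) := by
  conv_lhs => rw [pi_decomp v]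
  rw [map_sum]
  exact Finset.sum_congr rfl fun j _ => map_smul D _ _

variable (hn : 4 ≤ n)
variable (D : (Fin n → ℂ) →ₗ[ℂ] (Fin n → ℂ))
variable (hD : ∀ u v, D (bilin n (cF1 n) u v)
    = bilin n (cF1 n) (D u) v + bilin n (cF1 n) u (D v))
include hn hD

lemma stDL0 : ∀ m, 2 ≤ m → ∀ hm : m < n, D (EV n m hm) ∈ Usub n 2 := by
  intro m hm2
  induction m, hm2 using Nat.le_induction with
  | base =>
    intro hm
    have hEV : EV n 2 hm
        = bilin n (cF1 n) (EV n 0 (by omega)) (EV n 0 (by omega)) := by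
      rw [stL4a hn]
    rw [hEV, hD]
    exact add_mem (stL1 hn _ _) (stL1 hn _ _)
  | succ m hm2 ih =>
    intro hm
    have hEV : EV n (m + 1) hm
        = bilin n (cF1 n) (EV n m (by omega)) (EV n 0 (by omega)) := by
      rw [stL4b hn (by omega) hm]
    rw [hEV, hD]
    exact add_mem (stL1 hn _ _) (stL1 hn _ _)

lemma stDL1 {v : Fin n → ℂ} (hv : v ∈ Usub n 2) : D v ∈ Usub n 2 := by
  rw [D_decomp]
  refine Submodule.sum_mem _ fun j _ => ?_
  by_cases hj : (j : ℕ) < 2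
  · rw [hv j hj, zero_smul]; exact zero_mem _
  · refine Submodule.smul_mem _ _ ?_
    exact stDL0 hn D hD (j : ℕ) (by omega) j.isLt

variable (hD1 : ∀ h0 : 0 < n, D (EV n 0 h0) ∈ Usub n 2)
include hD1

lemma stDL2 (h1 : 1 < n) : D (EV n 1 h1) ∈ Usub n 2 := by
  have h0 : (0 : ℕ) < n := by omega
  have h2n : (2 : ℕ) < n := by omega
  set e0 := EV n 0 h0 with he0
  set e1 := EV n 1 h1 with he1
  have he10 : e1 ⟨0, h0⟩ = 0 := by
    rw [he1]; simp [EV, Pi.single_apply, Fin.ext_iff]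
  have he00 : e0 ⟨0, h0⟩ = 1 := by rw [he0]; simp [EV]
  have he01 : e0 ⟨1, h1⟩ = 0 := by
    rw [he0]; simp [EV, Pi.single_apply, Fin.ext_iff]
  have hDe0 := hD1 h0
  have hD00 : D e0 ⟨0, h0⟩ = 0 := hDe0 ⟨0, h0⟩ (show (0 : ℕ) < 2 by omega)
  have hD01 : D e0 ⟨1, h1⟩ = 0 := hDe0 ⟨1, h1⟩ (show (1 : ℕ) < 2 by omega)
  -- a convenient coordinate formula
  have bF2 : ∀ u v : Fin n → ℂ, bilin n (cF1 n) u v ⟨2, h2n⟩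
      = v ⟨0, h0⟩ * (u ⟨0, h0⟩ + u ⟨1, h1⟩) := by
    intro u v
    rw [bF_apply hn]
    simp only [show ((⟨2, h2n⟩ : Fin n) : ℕ) = 2 from rfl]
    rw [if_pos trivial, if_neg (by omega : ¬ (3 ≤ (2 : ℕ))), add_zero]
  -- Step A : (D e1) at coordinate 0 vanishes
  have hz : bilin n (cF1 n) e0 e1 = 0 := by
    rw [stL5 hn, he10, zero_smul]
  have hstep := hD e0 e1
  rw [hz, map_zero] at hstep
  have hfirst : bilin n (cF1 n) (D e0) e1 = 0 := by
    rw [stL5 hn, he10, zero_smul]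
  rw [hfirst, zero_add] at hstep
  have hA0 : D e1 ⟨0, h0⟩ = 0 := by
    have hc := congrFun hstep.symm ⟨2, h2n⟩
    rw [bF2] at hc
    rw [he00, he01] at hc
    simpa using hc
  -- Step B : (D e1) at coordinate 1 vanishes
  have hEa : bilin n (cF1 n) e0 e0 = EV n 2 h2n := by rw [he0, stL4a hn]
  have hEb : bilin n (cF1 n) e1 e0 = EV n 2 h2n := by
    rw [he0, he1, stL4b hn (le_refl 1) h2n]
  have hAB : bilin n (cF1 n) (D e0) e0 + bilin n (cF1 n) e0 (D e0)
      = bilin n (cF1 n) (D e1) e0 + bilin n (cF1 n) e1 (D e0) :=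
    calc bilin n (cF1 n) (D e0) e0 + bilin n (cF1 n) e0 (D e0)
        = D (bilin n (cF1 n) e0 e0) := (hD e0 e0).symm
      _ = D (bilin n (cF1 n) e1 e0) := by rw [hEa, hEb]
      _ = _ := hD e1 e0
  have hc := congrFun hAB ⟨2, h2n⟩
  simp only [Pi.add_apply] at hc
  rw [bF2, bF2, bF2, bF2, he00, he01, he10, hD00, hD01, hA0] at hc
  have hA1 : D e1 ⟨1, h1⟩ = 0 := by
    have he11 : e1 ⟨1, h1⟩ = 1 := by rw [he1]; simp [EV]
    rw [he11] at hc
    simpa using hc.symm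
  intro j hj
  rcases (show (j : ℕ) = 0 ∨ (j : ℕ) = 1 by omega) with h | h
  · have hjj : j = ⟨0, h0⟩ := Fin.ext h
    rw [hjj]; exact hA0
  · have hjj : j = ⟨1, h1⟩ := Fin.ext h
    rw [hjj]; exact hA1

lemma stDL3 (v : Fin n → ℂ) : D v ∈ Usub n 2 := by
  have h0 : (0 : ℕ) < n := by omega
  have h1 : (1 : ℕ) < n := by omega
  rw [D_decomp]
  refine Submodule.sum_mem _ fun j _ => ?_
  refine Submodule.smul_mem _ _ ?_
  rcases (show (j : ℕ) = 0 ∨ (j : ℕ) = 1 ∨ 2 ≤ (j : ℕ) by omega) with h | h | h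
  · have hjj : j = ⟨0, h0⟩ := Fin.ext h
    rw [hjj]
    exact hD1 h0
  · have hjj : j = ⟨1, h1⟩ := Fin.ext h
    rw [hjj]
    exact stDL2 hn D hD hD1 h1
  · exact stDL0 hn D hD (j : ℕ) h j.isLt

lemma stDL4 : ∀ m, 2 ≤ m → ∀ hm : m < n, D (EV n m hm) ∈ Usub n (m + 1) := by
  have h0 : (0 : ℕ) < n := by omega
  have h1 : (1 : ℕ) < n := by omega
  have hD00 : D (EV n 0 h0) ⟨0, h0⟩ = 0 := hD1 h0 ⟨0, h0⟩ (show (0 : ℕ) < 2 by omega)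
  intro m hm2
  induction m, hm2 using Nat.le_induction with
  | base =>
    intro hm
    have hEV : EV n 2 hm
        = bilin n (cF1 n) (EV n 1 h1) (EV n 0 h0) := by
      rw [stL4b hn (le_refl 1) hm]
    rw [hEV, hD]
    have hsec : bilin n (cF1 n) (EV n 1 h1) (D (EV n 0 h0)) = 0 := by
      rw [stL5 hn, hD00, zero_smul]
    rw [hsec, add_zero]
    exact stL2 hn (le_refl 2) (stDL2 hn D hD hD1 h1) _
  | succ m hm2 ih =>
    intro hm
    have hEV : EV n (m + 1) hm
        = bilin n (cF1 n) (EV n m (by omega)) (EV n 0 h0) := by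
      rw [stL4b hn (by omega) hm]
    rw [hEV, hD]
    have hsec : bilin n (cF1 n) (EV n m (by omega)) (D (EV n 0 h0)) = 0 := by
      rw [stL5 hn, hD00, zero_smul]
    rw [hsec, add_zero]
    exact stL2 hn (by omega) (ih (by omega)) _

lemma stDL5 (k : ℕ) (hk : 2 ≤ k) {v : Fin n → ℂ} (hv : v ∈ Usub n k) :
    D v ∈ Usub n (k + 1) := by
  rw [D_decomp]
  refine Submodule.sum_mem _ fun j _ => ?_
  by_cases hj : (j : ℕ) < k
  · rw [hv j hj, zero_smul]; exact zero_mem _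
  · refine Submodule.smul_mem _ _ ?_
    have hjk : 2 ≤ (j : ℕ) := by omega
    have := stDL4 hn D hD hD1 (j : ℕ) hjk j.isLt
    exact Usub_anti (by omega) this

end DerLemmas

section AlgLemmas

variable {L : Type*} [AddCommGroup L] [Module ℂ L] {b : L →ₗ[ℂ] L →ₗ[ℂ] L}

lemma bracketSpan_le {S T V : Submodule ℂ L}
    (h : ∀ x ∈ S, ∀ y ∈ T, b x y ∈ V) : bracketSpan b S T ≤ V := by
  rw [bracketSpan, Submodule.span_le]
  rintro z ⟨x, hx, y, hy, rfl⟩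
  exact h x hx y hy

lemma mem_bracketSpan {S T : Submodule ℂ L} {x y : L} (hx : x ∈ S) (hy : y ∈ T) :
    b x y ∈ bracketSpan b S T :=
  Submodule.subset_span ⟨x, hx, y, hy, rfl⟩

lemma bracketSpan_mono {S S' T T' : Submodule ℂ L} (hS : S ≤ S') (hT : T ≤ T') :
    bracketSpan b S T ≤ bracketSpan b S' T' :=
  bracketSpan_le fun x hx y hy => mem_bracketSpan (hS hx) (hT hy)

lemma isIdeal_sup {I J : Submodule ℂ L} (hI : IsIdeal b I) (hJ : IsIdeal b J) :
    IsIdeal b (I ⊔ J) := by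
  intro a ha y
  obtain ⟨p, hp, q, hq, rfl⟩ := Submodule.mem_sup.1 ha
  constructor
  · rw [show b (p + q) y = b p y + b q y from by rw [map_add, LinearMap.add_apply]]
    exact add_mem (Submodule.mem_sup_left (hI p hp y).1) (Submodule.mem_sup_right (hJ q hq y).1)
  · rw [show b y (p + q) = b y p + b y q from map_add _ _ _]
    exact add_mem (Submodule.mem_sup_left (hI p hp y).2) (Submodule.mem_sup_right (hJ q hq y).2)

/-- The set of `a` such that all brackets with `a` lie in `V`, as a submodule. -/
def idealizer (b : L →ₗ[ℂ] L →ₗ[ℂ] L) (V : Submodule ℂ L) : Submodule ℂ L where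
  carrier := {a | ∀ y, b a y ∈ V ∧ b y a ∈ V}
  add_mem' := by
    intro a a' ha ha'
    intro y
    constructor
    · rw [show b (a + a') y = b a y + b a' y from by rw [map_add, LinearMap.add_apply]]
      exact add_mem (ha y).1 (ha' y).1
    · rw [show b y (a + a') = b y a + b y a' from map_add _ _ _]
      exact add_mem (ha y).2 (ha' y).2
  zero_mem' := by
    intro y
    constructor
    · rw [show b 0 y = 0 from by rw [map_zero, LinearMap.zero_apply]]
      exact zero_mem _
    · rw [show b y 0 = 0 from map_zero _]
      exact zero_mem _
  smul_mem' := by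
    intro c a ha y
    constructor
    · rw [show b (c • a) y = c • b a y from by rw [map_smul, LinearMap.smul_apply]]
      exact Submodule.smul_mem _ _ (ha y).1
    · rw [show b y (c • a) = c • b y a from map_smul _ _ _]
      exact Submodule.smul_mem _ _ (ha y).2

lemma isIdeal_bracketSpan (hb : IsLeibniz b) {P : Submodule ℂ L} (hP : IsIdeal b P) :
    IsIdeal b (bracketSpan b P P) := by
  have hgen : bracketSpan b P P ≤ idealizer b (bracketSpan b P P) := by
    apply bracketSpan_le
    intro p hp p' hp' y
    constructor
    · have h := hb p p' y
      have h2 : b (b p p') y = b p (b p' y) + b (b p y) p' := by rw [h]; abel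
      rw [h2]
      exact add_mem (mem_bracketSpan hp (hP p' hp' y).1) (mem_bracketSpan (hP p hp y).1 hp')
    · rw [hb y p p']
      exact sub_mem (mem_bracketSpan (hP p hp y).2 hp') (mem_bracketSpan (hP p' hp' y).2 hp)
  intro a ha y
  exact hgen ha y

/-- Derived series starting from a submodule `K`. -/
def serFrom (b : L →ₗ[ℂ] L →ₗ[ℂ] L) (K : Submodule ℂ L) : ℕ → Submodule ℂ L
  | 0 => K
  | s + 1 => bracketSpan b (serFrom b K s) (serFrom b K s)

lemma serFrom_le_derSeries (K : Submodule ℂ L) : ∀ s, serFrom b K s ≤ derSeries b s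
  | 0 => le_top
  | s + 1 => bracketSpan_mono (serFrom_le_derSeries K s) (serFrom_le_derSeries K s)

lemma serFrom_isIdeal (hb : IsLeibniz b) {K : Submodule ℂ L} (hK : IsIdeal b K) :
    ∀ s, IsIdeal b (serFrom b K s)
  | 0 => hK
  | s + 1 => isIdeal_bracketSpan hb (serFrom_isIdeal hb hK s)

lemma serFrom_le_self {K : Submodule ℂ L} (hK : IsIdeal b K) : ∀ s, serFrom b K s ≤ K
  | 0 => le_refl _
  | s + 1 => bracketSpan_le fun x hx y _ => (hK x (serFrom_le_self hK s hx) y).1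

lemma idealLCS_top_eq_lcs : ∀ k, idealLCS b ⊤ k = lcs b k
  | 0 => rfl
  | k + 1 => by
    show bracketSpan b (idealLCS b ⊤ k) ⊤ = bracketSpan b (lcs b k) ⊤
    rw [idealLCS_top_eq_lcs k]

end AlgLemmas


theorem statement13 (n : ℕ) (hn : 4 ≤ n) {L : Type*}
    [AddCommGroup L] [Module ℂ L] [FiniteDimensional ℂ L]
    (b : L →ₗ[ℂ] L →ₗ[ℂ] L) (hb : IsLeibniz b)
    (hsolv : IsSolvableAlg b) (hnotnilp : ¬ IsNilpotentAlg b)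
    (hnil : NilradicalIso b (bilin n (cF1 n))) :
    Module.finrank ℂ L = n + 1 ∨ Module.finrank ℂ L = n + 2 := by
  classical
  obtain ⟨I, ⟨⟨hIideal, hInilp⟩, hImax⟩, f, hfinj, hfrange, hfbr⟩ := hnil
  have h0 : (0 : ℕ) < n := by omega
  have h1n : (1 : ℕ) < n := by omega
  -- the nilradical has dimension n
  have hIrank : finrank ℂ I = n := by
    rw [← hfrange, LinearMap.finrank_range_of_inj hfinj, Module.finrank_fin_fun]
  have hge : n ≤ finrank ℂ L := by
    rw [← hIrank]; exact Submodule.finrank_le I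
  have hlow : finrank ℂ L ≠ n := by
    intro hEqn
    have hItop : I = ⊤ := Submodule.eq_top_of_finrank_eq (by rw [hIrank, hEqn])
    obtain ⟨k, hk⟩ := hInilp
    apply hnotnilp
    refine ⟨k, ?_⟩
    rw [← idealLCS_top_eq_lcs k, ← hItop]
    exact hk
  -- the inverse of f on its range
  set eqv := LinearEquiv.ofInjective f hfinj with heqv
  have hfeq : ∀ w : LinearMap.range f, f (eqv.symm w) = (w : L) := by
    intro w
    have h1 : ((eqv (eqv.symm w) : LinearMap.range f) : L) = f (eqv.symm w) := by
      rw [heqv, LinearEquiv.ofInjective_apply]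
    rw [← h1, LinearEquiv.apply_symm_apply]
  have hbmem : ∀ (y : L) (u : Fin n → ℂ), b (f u) y ∈ LinearMap.range f := by
    intro y u
    rw [hfrange]
    refine (hIideal (f u) ?_ y).1
    rw [← hfrange]
    exact ⟨u, rfl⟩
  -- right multiplication operators transported to coordinates
  set Dop : L → ((Fin n → ℂ) →ₗ[ℂ] (Fin n → ℂ)) := fun y =>
    eqv.symm.toLinearMap ∘ₗ
      LinearMap.codRestrict (LinearMap.range f) ((b.flip y) ∘ₗ f) (fun u => hbmem y u)
    with hDopdef
  have hfD : ∀ (y : L) (u : Fin n → ℂ), f (Dop y u) = b (f u) y := by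
    intro y u
    have h2 : Dop y u = eqv.symm ⟨b (f u) y, hbmem y u⟩ := rfl
    rw [h2, hfeq]
  have hDder : ∀ (y : L) (u v : Fin n → ℂ), Dop y (bilin n (cF1 n) u v)
      = bilin n (cF1 n) (Dop y u) v + bilin n (cF1 n) u (Dop y v) := by
    intro y u v
    apply hfinj
    simp only [map_add, hfD, hfbr]
    rw [hb (f u) (f v) y]
    abel
  -- the two linear functionals
  set s1 : Fin n → ℂ := Pi.single ⟨0, h0⟩ 1 with hs1def
  set E1 : L := f s1 with hE1def
  set c1 : L →ₗ[ℂ] (Fin n → ℂ) := eqv.symm.toLinearMap ∘ₗ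
      LinearMap.codRestrict (LinearMap.range f) (b E1) (fun y => hbmem y s1) with hc1def
  have hfc1 : ∀ y, f (c1 y) = b E1 y := by
    intro y
    have h2 : c1 y = eqv.symm ⟨b E1 y, hbmem y s1⟩ := rfl
    rw [h2, hfeq]
  have hc1Dop : ∀ y, c1 y = Dop y s1 := fun y => rfl
  set Psi : L →ₗ[ℂ] ℂ × ℂ :=
    LinearMap.prod ((LinearMap.proj (⟨0, h0⟩ : Fin n)) ∘ₗ c1)
      ((LinearMap.proj (⟨1, h1n⟩ : Fin n)) ∘ₗ c1) with hPsidef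
  set K := LinearMap.ker Psi with hKdef
  have hKmem : ∀ z, z ∈ K ↔ c1 z ∈ Usub n 2 := by
    intro z
    constructor
    · intro hz
      have hz' : Psi z = 0 := hz
      have h00 : c1 z ⟨0, h0⟩ = 0 := congrArg Prod.fst hz'
      have h11 : c1 z ⟨1, h1n⟩ = 0 := congrArg Prod.snd hz'
      rw [mem_Usub]
      intro j hj
      rcases (show (j : ℕ) = 0 ∨ (j : ℕ) = 1 by omega) with h | h
      · have hjj : j = ⟨0, h0⟩ := Fin.ext h
        rw [hjj]; exact h00
      · have hjj : j = ⟨1, h1n⟩ := Fin.ext h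
        rw [hjj]; exact h11
    · intro hz
      have h00 := hz ⟨0, h0⟩ (show (0 : ℕ) < 2 by omega)
      have h11 := hz ⟨1, h1n⟩ (show (1 : ℕ) < 2 by omega)
      show Psi z = 0
      have h2 : Psi z = (c1 z ⟨0, h0⟩, c1 z ⟨1, h1n⟩) := rfl
      rw [h2, h00, h11]
      rfl
  have hrank2 : finrank ℂ L ≤ finrank ℂ K + 2 := by
    have hsum := LinearMap.finrank_range_add_finrank_ker Psi
    rw [← hKdef] at hsum
    have hle : finrank ℂ (LinearMap.range Psi) ≤ 2 := by
      have ha := Submodule.finrank_le (LinearMap.range Psi)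
      have hb2 : finrank ℂ (ℂ × ℂ) = 2 := by
        rw [Module.finrank_prod, Module.finrank_self]
      omega
    omega
  have hDx1 : ∀ z ∈ K, ∀ h0' : 0 < n, Dop z (EV n 0 h0') ∈ Usub n 2 := by
    intro z hz h0'
    have h := (hKmem z).1 hz
    rw [hc1Dop z] at h
    exact h
  -- the basic membership facts
  have hA : ∀ (y : L) (u : Fin n → ℂ), u ∈ Usub n 2 →
      b (f u) y ∈ Submodule.map f (Usub n 2) := by
    intro y u hu
    rw [← hfD y u]
    exact Submodule.mem_map_of_mem (stDL1 hn (Dop y) (hDder y) hu)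
  have hB : ∀ x ∈ K, ∀ u : Fin n → ℂ, b (f u) x ∈ Submodule.map f (Usub n 2) := by
    intro x hx u
    rw [← hfD x u]
    exact Submodule.mem_map_of_mem (stDL3 hn (Dop x) (hDder x) (hDx1 x hx) u)
  have hC : ∀ x ∈ K, ∀ k, 2 ≤ k → ∀ u ∈ Usub n k,
      b (f u) x ∈ Submodule.map f (Usub n (k + 1)) := by
    intro x hx k hk u hu
    rw [← hfD x u]
    exact Submodule.mem_map_of_mem (stDL5 hn (Dop x) (hDder x) (hDx1 x hx) k hk hu)
  have hDm : ∀ u v : Fin n → ℂ, b (f u) (f v) ∈ Submodule.map f (Usub n 2) := by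
    intro u v
    rw [← hfbr]
    exact Submodule.mem_map_of_mem (stL1 hn u v)
  have hEm : ∀ k, 2 ≤ k → ∀ u ∈ Usub n k, ∀ v : Fin n → ℂ,
      b (f u) (f v) ∈ Submodule.map f (Usub n (k + 1)) := by
    intro k hk u hu v
    rw [← hfbr]
    exact Submodule.mem_map_of_mem (stL2 hn hk hu v)
  have hmemW : ∀ z, z ∈ K ↔ b E1 z ∈ Submodule.map f (Usub n 2) := by
    intro z
    rw [hKmem z]
    constructor
    · intro h
      rw [← hfc1 z]
      exact Submodule.mem_map_of_mem h
    · rintro ⟨u, hu, huz⟩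
      have h2 : c1 z = u := hfinj (by rw [hfc1 z]; exact huz.symm)
      rw [h2]; exact hu
  have hKideal : IsIdeal b K := by
    intro x hx y
    constructor
    · rw [hmemW, hb E1 x y]
      apply sub_mem
      · rw [show b E1 x = f (c1 x) from (hfc1 x).symm]
        exact hA y (c1 x) ((hKmem x).1 hx)
      · rw [show b E1 y = f (c1 y) from (hfc1 y).symm]
        exact hB x hx (c1 y)
    · rw [hmemW, hb E1 y x]
      apply sub_mem
      · rw [show b E1 y = f (c1 y) from (hfc1 y).symm]
        exact hB x hx (c1 y)
      · rw [show b E1 x = f (c1 x) from (hfc1 x).symm]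
        exact hA y (c1 x) ((hKmem x).1 hx)
  -- the kernel is contained in the nilradical
  have hKI : K ≤ I := by
    by_contra hKln
    obtain ⟨s0, hs0⟩ := hsolv
    have hfind : ∃ s, serFrom b K s ≤ I :=
      ⟨s0, le_trans (serFrom_le_derSeries K s0) (by rw [hs0]; exact bot_le)⟩
    have hpos : 0 < Nat.find hfind := by
      apply Nat.pos_of_ne_zero
      intro h
      apply hKln
      have hsp := Nat.find_spec hfind
      rw [h] at hsp
      exact hsp
    set t := Nat.find hfind - 1 with htdef
    have hPnle : ¬ (serFrom b K t ≤ I) := Nat.find_min hfind (by omega)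
    have hPP : bracketSpan b (serFrom b K t) (serFrom b K t) ≤ I := by
      have h2 : t + 1 = Nat.find hfind := by omega
      have hsp := Nat.find_spec hfind
      rw [← h2] at hsp
      exact hsp
    have hPideal : IsIdeal b (serFrom b K t) := serFrom_isIdeal hb hKideal t
    have hPK : serFrom b K t ≤ K := serFrom_le_self hKideal t
    have hIform : ∀ x ∈ I, ∃ u, f u = x := by
      intro x hx
      rw [← hfrange] at hx
      exact hx
    have hQideal : IsIdeal b (serFrom b K t ⊔ I) := isIdeal_sup hPideal hIideal
    have h1 : idealLCS b (serFrom b K t ⊔ I) 1 ≤ I := by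
      show bracketSpan b (idealLCS b (serFrom b K t ⊔ I) 0) (serFrom b K t ⊔ I) ≤ I
      apply bracketSpan_le
      intro x hxQ y hyQ
      obtain ⟨p, hp, a, ha, rfl⟩ := Submodule.mem_sup.1 hxQ
      obtain ⟨p', hp', a', ha', rfl⟩ := Submodule.mem_sup.1 hyQ
      rw [show b (p + a) (p' + a') = b p (p' + a') + b a (p' + a') from by
        rw [map_add b p a, LinearMap.add_apply]]
      refine add_mem ?_ ((hIideal a ha (p' + a')).1)
      rw [show b p (p' + a') = b p p' + b p a' from map_add _ _ _]
      exact add_mem (hPP (mem_bracketSpan hp hp')) ((hIideal a' ha' p).2)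
    have h2 : idealLCS b (serFrom b K t ⊔ I) 2 ≤ Submodule.map f (Usub n 2) := by
      show bracketSpan b (idealLCS b (serFrom b K t ⊔ I) 1) (serFrom b K t ⊔ I) ≤ _
      apply bracketSpan_le
      intro x hx y hy
      obtain ⟨u, hu⟩ := hIform x (h1 hx)
      obtain ⟨p, hp, a, ha, rfl⟩ := Submodule.mem_sup.1 hy
      obtain ⟨v, hv⟩ := hIform a ha
      rw [← hu, ← hv,
        show b (f u) (p + f v) = b (f u) p + b (f u) (f v) from map_add _ _ _]
      exact add_mem (hB p (hPK hp) u) (hDm u v)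
    have h3 : ∀ k, 2 ≤ k →
        idealLCS b (serFrom b K t ⊔ I) k ≤ Submodule.map f (Usub n k) →
        idealLCS b (serFrom b K t ⊔ I) (k + 1) ≤ Submodule.map f (Usub n (k + 1)) := by
      intro k hk ih
      show bracketSpan b (idealLCS b (serFrom b K t ⊔ I) k) (serFrom b K t ⊔ I) ≤ _
      apply bracketSpan_le
      intro x hx y hy
      obtain ⟨u, hu, huf⟩ := Submodule.mem_map.1 (ih hx)
      obtain ⟨p, hp, a, ha, rfl⟩ := Submodule.mem_sup.1 hy
      obtain ⟨v, hv⟩ := hIform a ha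
      rw [← huf, ← hv,
        show b (f u) (p + f v) = b (f u) p + b (f u) (f v) from map_add _ _ _]
      exact add_mem (hC p (hPK hp) k hk u hu) (hEm k hk u hu v)
    have hchain : ∀ k, idealLCS b (serFrom b K t ⊔ I) (k + 2)
        ≤ Submodule.map f (Usub n (k + 2)) := by
      intro k
      induction k with
      | zero => exact h2
      | succ m ih => exact h3 (m + 2) (by omega) ih
    have hQnil : idealLCS b (serFrom b K t ⊔ I) n = ⊥ := by
      have h := hchain (n - 2)
      rw [show n - 2 + 2 = n by omega] at h
      rw [Usub_bot, Submodule.map_bot] at h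
      exact le_bot_iff.1 h
    exact hPnle (le_trans le_sup_left (hImax _ ⟨hQideal, n, hQnil⟩))
  have hKrank : finrank ℂ K ≤ n := by
    rw [← hIrank]
    exact Submodule.finrank_mono hKI
  omega
end

section
/- Let n ≥ 4 and let d be a derivation of the algebra F_n^2. Then there exist scalars α_1, …, α_n, β, γ ∈ ℂ such that d(e_1) = Σ_{i=1}^{n} α_i e_i, d(e_2) = β e_2 + γ e_n, and d(e_i) = (i−1)α_1 e_i + Σ_{j=i+1}^{n} α_{j−i+2} e_j for 3 ≤ i ≤ n. -/
open Finset Module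

lemma E_apply (n i : ℕ) (h1 : 1 ≤ i) (h2 : i ≤ n) (k : Fin n) :
    E n i k = if k.val = i - 1 then 1 else 0 := by
  rw [E, dif_pos ⟨h1, h2⟩]
  simp [Pi.single_apply, Fin.ext_iff]

lemma sum_E_apply (n : ℕ) (f : ℕ → ℂ) (lo : ℕ) (hlo : 1 ≤ lo) (k : Fin n) :
    (∑ i ∈ Finset.Icc lo n, f i • E n i) k =
      if lo ≤ k.val + 1 then f (k.val + 1) else 0 := by
  rw [Finset.sum_apply]
  have step : ∀ i ∈ Finset.Icc lo n, (f i • E n i) k = if i = k.val + 1 then f i else 0 := by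
    intro i hi
    rw [Finset.mem_Icc] at hi
    rw [Pi.smul_apply, E_apply n i (le_trans hlo hi.1) hi.2, smul_eq_mul]
    split_ifs with h h' h'
    · ring
    · exfalso; omega
    · exfalso; omega
    · ring
  rw [Finset.sum_congr rfl step, Finset.sum_ite_eq' (Finset.Icc lo n) (k.val + 1) f]
  have hk : k.val + 1 ≤ n := k.isLt
  by_cases h : lo ≤ k.val + 1
  · rw [if_pos (Finset.mem_Icc.mpr ⟨h, hk⟩), if_pos h]
  · rw [if_neg (fun hm => h (Finset.mem_Icc.mp hm).1), if_neg h]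

lemma Bk (n : ℕ) (hn : 4 ≤ n) (x y : Fin n → ℂ) (k : Fin n) :
    bilin n (cF2 n) x y k =
      y ⟨0, by omega⟩ * ((if k.val = 2 then x ⟨0, by omega⟩ else 0) +
        (if 3 ≤ k.val then x ⟨k.val - 1, by omega⟩ else 0)) := by
  have h0 : (0:ℕ) < n := by omega
  show (∑ i, ∑ j, x i * y j * cF2 n i j k) = _
  have hj : ∀ i : Fin n, (∑ j, x i * y j * cF2 n i j k) = x i * y ⟨0, h0⟩ * cF2 n i ⟨0, h0⟩ k := by
    intro i
    apply Finset.sum_eq_single_of_mem (⟨0, h0⟩ : Fin n) (Finset.mem_univ _)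
    intro j _ hjne
    have hj0 : ¬ j.val = 0 := fun h => hjne (Fin.ext h)
    have : cF2 n i j k = 0 := by unfold cF2; exact if_neg (fun hc => hj0 hc.1)
    rw [this, mul_zero]
  rw [Finset.sum_congr rfl (fun i _ => hj i)]
  rcases lt_or_ge k.val 2 with hk | hk
  · rw [Finset.sum_eq_zero, if_neg (by omega), if_neg (by omega)]
    · ring
    · intro i _
      have : cF2 n i ⟨0, h0⟩ k = 0 := by
        unfold cF2; apply if_neg; simp only [Fin.val_mk]; omega
      rw [this, mul_zero]
  rcases eq_or_lt_of_le hk with hk2 | hk3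
  · rw [Finset.sum_eq_single_of_mem (⟨0, h0⟩ : Fin n) (Finset.mem_univ _)]
    · have h1 : cF2 n ⟨0, h0⟩ ⟨0, h0⟩ k = 1 := by
        unfold cF2; exact if_pos ⟨rfl, Or.inl ⟨rfl, hk2.symm⟩⟩
      rw [h1, if_pos hk2.symm, if_neg (by omega)]; ring
    · intro i _ hine
      have hi : ¬ i.val = 0 := fun h => hine (Fin.ext h)
      have : cF2 n i ⟨0, h0⟩ k = 0 := by
        unfold cF2; apply if_neg; simp only [Fin.val_mk]; omega
      rw [this, mul_zero]
  · have hk3' : 3 ≤ k.val := hk3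
    rw [Finset.sum_eq_single_of_mem (⟨k.val - 1, by omega⟩ : Fin n) (Finset.mem_univ _)]
    · have h1 : cF2 n ⟨k.val - 1, by omega⟩ ⟨0, h0⟩ k = 1 := by
        unfold cF2
        exact if_pos ⟨rfl, Or.inr ⟨by simp only [Fin.val_mk]; omega, by simp only [Fin.val_mk]; omega⟩⟩
      rw [h1, if_neg (by omega), if_pos hk3']; ring
    · intro i _ hine
      have hi : ¬ i.val = k.val - 1 := fun h => hine (Fin.ext h)
      have : cF2 n i ⟨0, h0⟩ k = 0 := by
        unfold cF2; apply if_neg; simp only [Fin.val_mk]; omega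
      rw [this, mul_zero]

lemma app_congr {n : ℕ} (w : Fin n → ℂ) {p q : ℕ} {hp : p < n} {hq : q < n} (h : p = q) :
    w ⟨p, hp⟩ = w ⟨q, hq⟩ := by subst h; rfl


set_option maxHeartbeats 2000000 in
theorem statement16 (n : ℕ) (hn : 4 ≤ n)
    (d : (Fin n → ℂ) →ₗ[ℂ] (Fin n → ℂ)) (hd : IsDerivation (bilin n (cF2 n)) d) :
    ∃ (a : ℕ → ℂ) (β γ : ℂ),
      d (E n 1) = ∑ i ∈ Finset.Icc 1 n, a i • E n i ∧
      d (E n 2) = β • E n 2 + γ • E n n ∧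
      ∀ i ∈ Finset.Icc 3 n, d (E n i) =
        (((i : ℂ) - 1) * a 1) • E n i + ∑ j ∈ Finset.Icc (i+1) n, a (j - i + 2) • E n j := by
  have h0 : (0:ℕ) < n := by omega
  obtain ⟨a, ha⟩ : ∃ a : ℕ → ℂ, ∀ j, ∀ _ : 1 ≤ j, ∀ _ : j ≤ n,
      a j = d (E n 1) ⟨j - 1, by omega⟩ :=
    ⟨fun j => if h : 1 ≤ j ∧ j ≤ n then d (E n 1) ⟨j - 1, by omega⟩ else 0,
     fun j h1 h2 => dif_pos ⟨h1, h2⟩⟩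
  have hac : ∀ p q : ℕ, p = q → a p = a q := fun p q h => by rw [h]
  have he10 : E n 1 (⟨0, h0⟩ : Fin n) = 1 := by
    rw [E_apply n 1 le_rfl (by omega)]; norm_num
  -- product facts
  have hB11 : bilin n (cF2 n) (E n 1) (E n 1) = E n 3 := by
    funext k
    rw [Bk n hn, E_apply n 3 (by omega) (by omega) k]
    simp only [E_apply n 1 le_rfl (by omega), Fin.val_mk]
    split_ifs <;>
      first
      | (exfalso; omega)
      | contradiction
      | (exact absurd trivial ‹¬True›)
      | (push_cast; ring)
  have hBi1 : ∀ i, 3 ≤ i → i + 1 ≤ n →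
      bilin n (cF2 n) (E n i) (E n 1) = E n (i+1) := by
    intro i h3 h1n
    funext k
    rw [Bk n hn, E_apply n (i+1) (by omega) h1n k]
    simp only [E_apply n 1 le_rfl (by omega), E_apply n i (by omega) (by omega), Fin.val_mk]
    split_ifs <;>
      first
      | (exfalso; omega)
      | contradiction
      | (exact absurd trivial ‹¬True›)
      | (push_cast; ring)
  have hB21 : bilin n (cF2 n) (E n 2) (E n 1) = 0 := by
    funext k
    rw [Bk n hn]
    simp only [E_apply n 1 le_rfl (by omega), E_apply n 2 (by omega) (by omega), Fin.val_mk,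
      Pi.zero_apply]
    split_ifs <;>
      first
      | (exfalso; omega)
      | contradiction
      | (exact absurd trivial ‹¬True›)
      | (push_cast; ring)
  -- facts about d (E n 2)
  have h2v : bilin n (cF2 n) (E n 2) (d (E n 1)) = 0 := by
    funext k
    rw [Bk n hn]
    simp only [E_apply n 2 (by omega) (by omega), Fin.val_mk, Pi.zero_apply]
    split_ifs <;>
      first
      | (exfalso; omega)
      | contradiction
      | (exact absurd trivial ‹¬True›)
      | (push_cast; ring)
  have hw : bilin n (cF2 n) (d (E n 2)) (E n 1) = 0 := by
    have h := hd (E n 2) (E n 1)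
    rw [hB21, map_zero, h2v, add_zero] at h
    exact h.symm
  have hc : ∀ k : Fin n,
      (if k.val = 2 then d (E n 2) ⟨0, h0⟩ else 0) +
      (if 3 ≤ k.val then d (E n 2) ⟨k.val - 1, by omega⟩ else 0) = 0 := by
    intro k
    have hck := congrFun hw k
    rw [Bk n hn, he10, one_mul, Pi.zero_apply] at hck
    exact hck
  have hc0 : d (E n 2) ⟨0, h0⟩ = 0 := by
    have h := hc ⟨2, by omega⟩
    norm_num at h
    exact h
  have hcj : ∀ j, ∀ _ : 2 ≤ j, ∀ _ : j ≤ n - 2, d (E n 2) ⟨j, by omega⟩ = 0 := by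
    intro j hj1 hj2
    have h := hc ⟨j + 1, by omega⟩
    simp only [Fin.val_mk] at h
    rw [if_neg (by omega), if_pos (by omega), zero_add] at h
    exact (app_congr (d (E n 2)) (by omega)).trans h
  -- the key induction for e_i, 3 ≤ i ≤ n
  have key : ∀ i, ∀ _ : 3 ≤ i, i ≤ n → ∀ k : Fin n, d (E n i) k =
      (if k.val + 1 = i then ((i : ℂ) - 1) * a 1
       else if i < k.val + 1 then a (k.val + 1 - i + 2) else 0) := by
    intro i hi3
    induction i, hi3 using Nat.le_induction with
    | base =>
      intro _ k
      have hd3 : d (E n 3) =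
          bilin n (cF2 n) (d (E n 1)) (E n 1) + bilin n (cF2 n) (E n 1) (d (E n 1)) := by
        rw [← hB11]; exact hd (E n 1) (E n 1)
      rw [hd3, Pi.add_apply, Bk n hn, Bk n hn, he10, one_mul]
      simp only [E_apply n 1 le_rfl (by omega), Fin.val_mk]
      rw [ha 1 le_rfl (by omega), ha (k.val + 1 - 3 + 2) (by omega) (by omega)]
      split_ifs
      all_goals try (exfalso; omega)
      all_goals try (exact (‹False›).elim)
      all_goals try (exact absurd trivial ‹¬True›)
      all_goals try (push_cast; ring)
      exact app_congr (d (E n 1)) (by omega)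
    | succ i hi ih =>
      intro hin k
      have hdstep : d (E n (i+1)) =
          bilin n (cF2 n) (d (E n i)) (E n 1) + bilin n (cF2 n) (E n i) (d (E n 1)) := by
        rw [← hBi1 i hi hin]; exact hd (E n i) (E n 1)
      rw [hdstep, Pi.add_apply, Bk n hn, Bk n hn, he10, one_mul]
      simp only [ih (by omega), E_apply n i (by omega) (by omega), Fin.val_mk]
      rw [ha 1 le_rfl (by omega)]
      split_ifs
      all_goals try (exfalso; omega)
      all_goals try (exact (‹False›).elim)
      all_goals try (exact absurd trivial ‹¬True›)
      all_goals try (push_cast; ring)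
      all_goals try (exact hac _ _ (by omega))
      all_goals try (exact app_congr (d (E n 1)) (by omega))
      all_goals try (ring_nf; exact hac _ _ (by omega))
      all_goals (ring_nf; exact app_congr (d (E n 1)) (by omega))
  refine ⟨a, d (E n 2) ⟨1, by omega⟩, d (E n 2) ⟨n - 1, by omega⟩, ?_, ?_, ?_⟩
  · funext k
    rw [sum_E_apply n a 1 le_rfl k, if_pos (by omega), ha (k.val + 1) (by omega) (by omega)]
    exact app_congr (d (E n 1)) (by omega)
  · funext m
    rw [Pi.add_apply, Pi.smul_apply, Pi.smul_apply, smul_eq_mul, smul_eq_mul,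
      E_apply n 2 (by omega) (by omega) m, E_apply n n (by omega) le_rfl m]
    by_cases hm1 : m.val = 1
    · rw [if_pos (by omega), if_neg (by omega), mul_one, mul_zero, add_zero]
      exact app_congr (d (E n 2)) (by omega)
    · by_cases hmn : m.val = n - 1
      · rw [if_neg (by omega), if_pos (by omega), mul_zero, mul_one, zero_add]
        exact app_congr (d (E n 2)) (by omega)
      · rw [if_neg (by omega), if_neg (by omega), mul_zero, mul_zero, add_zero]
        by_cases hm0 : m.val = 0
        · exact (app_congr (d (E n 2)) (by omega : (m:ℕ) = 0)).trans hc0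
        · exact (app_congr (d (E n 2)) (rfl : (m:ℕ) = m.val)).trans
            (hcj m.val (by omega) (by omega))
  · intro i hi
    rw [Finset.mem_Icc] at hi
    funext k
    rw [key i hi.1 hi.2 k, Pi.add_apply, Pi.smul_apply, smul_eq_mul,
      sum_E_apply n (fun j => a (j - i + 2)) (i + 1) (by omega) k,
      E_apply n i (by omega) hi.2 k]
    by_cases h1 : k.val + 1 = i
    · rw [if_pos h1, if_pos (by omega), if_neg (by omega), mul_one, add_zero]
    · by_cases h2 : i < k.val + 1
      · rw [if_neg h1, if_pos h2, if_neg (by omega), if_pos (by omega), mul_zero, zero_add]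
      · rw [if_neg h1, if_neg h2, if_neg (by omega), if_neg (by omega), mul_zero, zero_add]
end
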